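/- Let Γ^k_{ij} (i,j,k ∈ {1,...,n}) be functions of u^1,...,u^n satisfying: Γ^k_{ij} = 0 whenever i = 1 or j = 1; Γ^k_{ij} = Γ^{k+4-i-j}_{22} whenever k − i − j ≥ −2 and i,j ≥ 2; Γ^k_{ij} = 0 if k − i − j < −2; Γ^2_{22} = −ε/u^2; and Γ^{m+1}_{22} = −(1/u^2) Σ_{s=1}^{m-1} u^{2+s} Γ^{m+1-s}_{22} for m ≥ 2. Then for every i,j ∈ {1,...,n}: Σ_{k=1}^n Γ^i_{jk} u^k = −ε·δ^i_j·(1 − δ^j_1), i.e. the sum is 0 if i ≠ j or j = 1, and equals −ε if i = j ≠ 1. -/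

import Mathlib

/-- **Lemma 7.2.** For the Christoffel symbols of the single `n×n`
Jordan block Lauricella connection (indices written 1-based, `Γ k i j` = `Γ^k_{ij}`),
the Euler-field contraction identity
`Σ_{k=1}^n Γ^i_{jk} u^k = −ε δ^i_j (1 − δ^j_1)` holds. -/
theorem statement3 (n : ℕ) (ε : ℝ) (u : ℕ → ℝ) (hu : u 2 ≠ 0)
    (Γ : ℕ → ℕ → ℕ → ℝ)
    (h1 : ∀ k i j : ℕ, i = 1 ∨ j = 1 → Γ k i j = 0)
    (h2 : ∀ k i j : ℕ, 2 ≤ i → 2 ≤ j → (-2 : ℤ) ≤ (k : ℤ) - (i : ℤ) - (j : ℤ) →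
      Γ k i j = Γ (k + 4 - i - j) 2 2)
    (h3 : ∀ k i j : ℕ, (k : ℤ) - (i : ℤ) - (j : ℤ) < -2 → Γ k i j = 0)
    (h4 : Γ 2 2 2 = -ε / u 2)
    (h5 : ∀ m : ℕ, 2 ≤ m →
      Γ (m + 1) 2 2 = -(1 / u 2) * ∑ s ∈ Finset.Icc 1 (m - 1), u (2 + s) * Γ (m + 1 - s) 2 2) :
    ∀ i j : ℕ, 1 ≤ i → i ≤ n → 1 ≤ j → j ≤ n →
      ∑ k ∈ Finset.Icc 1 n, Γ i j k * u k = if i = j ∧ j ≠ 1 then -ε else 0 := by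
  intro i j hi hin hj hjn
  rcases eq_or_lt_of_le hj with hj1 | hj2
  · -- j = 1
    rw [if_neg (by omega)]
    refine Finset.sum_eq_zero fun k _ => ?_
    rw [h1 i j k (Or.inl hj1.symm), zero_mul]
  · -- 2 ≤ j
    rcases lt_trichotomy i j with hij | hij | hij
    · -- i < j : all terms vanish
      rw [if_neg (by omega)]
      refine Finset.sum_eq_zero fun k hk => ?_
      simp only [Finset.mem_Icc] at hk
      rcases eq_or_lt_of_le hk.1 with hk1 | hk2
      · rw [h1 i j k (Or.inr hk1.symm), zero_mul]
      · rw [h3 i j k (by omega), zero_mul]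
    · -- i = j
      rw [if_pos ⟨hij, by omega⟩]
      rw [Finset.sum_eq_single_of_mem 2 (by simp [Finset.mem_Icc]; omega)]
      · rw [h2 i j 2 (by omega) (by omega) (by omega)]
        have : i + 4 - j - 2 = 2 := by omega
        rw [this, h4, div_mul_cancel₀ _ hu]
      · intro b hb hb2
        simp only [Finset.mem_Icc] at hb
        rcases eq_or_lt_of_le hb.1 with hb1 | hb3
        · rw [h1 i j b (Or.inr hb1.symm), zero_mul]
        · rw [h3 i j b (by omega), zero_mul]
    · -- i > j
      rw [if_neg (by omega)]
      obtain ⟨t, rfl⟩ : ∃ t, i = j + t := ⟨i - j, by omega⟩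
      have ht : 1 ≤ t := by omega
      have hsub : Finset.Icc 2 (t + 2) ⊆ Finset.Icc 1 n := by
        intro x hx
        simp only [Finset.mem_Icc] at *
        omega
      have hz : ∀ x ∈ Finset.Icc 1 n, x ∉ Finset.Icc 2 (t + 2) → Γ (j + t) j x * u x = 0 := by
        intro x hx hnx
        simp only [Finset.mem_Icc, not_and, not_le] at hx hnx
        rcases eq_or_lt_of_le hx.1 with hx1 | hx2
        · rw [h1 (j + t) j x (Or.inr hx1.symm), zero_mul]
        · rw [h3 (j + t) j x (by omega), zero_mul]
      rw [← Finset.sum_subset hsub hz]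
      have key : ∀ k ∈ Finset.Icc 2 (t + 2), Γ (j + t) j k * u k = Γ (t + 4 - k) 2 2 * u k := by
        intro k hk
        simp only [Finset.mem_Icc] at hk
        rw [h2 (j + t) j k (by omega) hk.1 (by omega)]
        have : j + t + 4 - j - k = t + 4 - k := by omega
        rw [this]
      rw [Finset.sum_congr rfl key, ← Finset.Ico_add_one_right_eq_Icc, Finset.sum_Ico_eq_sum_range]
      have hrn : t + 2 + 1 - 2 = t + 1 := by omega
      rw [hrn, Finset.sum_range_succ']
      have hmain : Γ (t + 4 - (2 + 0)) 2 2 * u (2 + 0) = Γ (t + 2) 2 2 * u 2 := by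
        have : t + 4 - (2 + 0) = t + 2 := by omega
        rw [this]
      rw [hmain, h5 (t + 1) (by omega)]
      have hS : ∑ i ∈ Finset.range t, Γ (t + 4 - (2 + (i + 1))) 2 2 * u (2 + (i + 1))
          = ∑ s ∈ Finset.Icc 1 (t + 1 - 1), u (2 + s) * Γ (t + 1 + 1 - s) 2 2 := by
        rw [← Finset.Ico_add_one_right_eq_Icc, Finset.sum_Ico_eq_sum_range]
        refine Finset.sum_congr (by congr 1) fun x hx => ?_
        simp only [Finset.mem_range] at hx
        rw [mul_comm]
        congr 2 <;> omega
      rw [hS]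
      field_simp
      ring
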